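/- Let A = 15+4√14, B = 15-4√14. For i ≥ 0 define c_{4i+1} = ((10+3√14)A^i-(10-3√14)B^i)/(2√14) and e_{4i+3} = ((71+19√14)A^i-(71-19√14)B^i)/(2√14). Then for every n ≥ 1, the sum D_2 = Σ_{k=0}^{n-1} c_{4k+1} · e_{4(n-k-1)+3} equals (n/56)·[(1508+403√14)A^{n-1} + (1508-403√14)B^{n-1}] + (11√14/392)·(A^n - B^n). -/
import Mathlib


theorem stmt_6
    (c1 e3 : ℕ → ℝ)
    (hc1 : ∀ i : ℕ, c1 i =
      ((10 + 3 * Real.sqrt 14) * (15 + 4 * Real.sqrt 14) ^ i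
        - (10 - 3 * Real.sqrt 14) * (15 - 4 * Real.sqrt 14) ^ i)
      / (2 * Real.sqrt 14))
    (he3 : ∀ i : ℕ, e3 i =
      ((71 + 19 * Real.sqrt 14) * (15 + 4 * Real.sqrt 14) ^ i
        - (71 - 19 * Real.sqrt 14) * (15 - 4 * Real.sqrt 14) ^ i)
      / (2 * Real.sqrt 14)) :
    ∀ n : ℕ, 1 ≤ n →
      ∑ k ∈ Finset.range n, c1 k * e3 (n - k - 1) =
        (n / 56 : ℝ) * ((1508 + 403 * Real.sqrt 14) * (15 + 4 * Real.sqrt 14) ^ (n-1)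
          + (1508 - 403 * Real.sqrt 14) * (15 - 4 * Real.sqrt 14) ^ (n-1))
        + (11 * Real.sqrt 14 / 392) *
            ((15 + 4 * Real.sqrt 14) ^ n - (15 - 4 * Real.sqrt 14) ^ n) := by
  intro n hn
  have hs0 : (0:ℝ) < Real.sqrt 14 := Real.sqrt_pos.mpr (by norm_num)
  have hs : Real.sqrt 14 ^ 2 = 14 := Real.sq_sqrt (by norm_num)
  set s := Real.sqrt 14 with hsdef
  set A : ℝ := 15 + 4 * s with hA
  set B : ℝ := 15 - 4 * s with hB
  have hsne : s ≠ 0 := ne_of_gt hs0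
  have h2s : (2 : ℝ) * s ≠ 0 := by positivity
  have key : ∀ k ∈ Finset.range n, c1 k * e3 (n - k - 1) =
      (1/56) * ((1508 + 403*s) * A^(n-1) + (1508-403*s) * B^(n-1))
      + (88 - 23*s)/56 * (A^k * B^(n-1-k))
      + (88 + 23*s)/56 * (B^k * A^(n-1-k)) := by
    intro k hk
    have hkn : k < n := Finset.mem_range.mp hk
    have h1 : n - k - 1 = n - 1 - k := by omega
    have hApow : A^(n-1) = A^k * A^(n-1-k) := by
      rw [← pow_add]; congr 1; omega
    have hBpow : B^(n-1) = B^k * B^(n-1-k) := by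
      rw [← pow_add]; congr 1; omega
    rw [hc1, he3, h1, hApow, hBpow, div_mul_div_comm, div_eq_iff (mul_ne_zero h2s h2s)]
    linear_combination ((-355/7)*B^k*B^(n-1-k) + (355/7)*B^k*A^(n-1-k)
      + (355/7)*A^k*B^(n-1-k) + (-355/7)*A^k*A^(n-1-k)
      + (403/14)*s*B^k*B^(n-1-k) + (-23/14)*s*B^k*A^(n-1-k)
      + (23/14)*s*A^k*B^(n-1-k) + (-403/14)*s*A^k*A^(n-1-k)) * hs
  rw [Finset.sum_congr rfl key]
  have hgeom1 : (∑ k ∈ Finset.range n, A ^ k * B ^ (n - 1 - k)) * (A - B) = A ^ n - B ^ n :=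
    geom_sum₂_mul A B n
  have hgeom2 : (∑ k ∈ Finset.range n, B ^ k * A ^ (n - 1 - k)) * (B - A) = B ^ n - A ^ n :=
    geom_sum₂_mul B A n
  set S1 := ∑ k ∈ Finset.range n, A ^ k * B ^ (n - 1 - k) with hS1
  set S2 := ∑ k ∈ Finset.range n, B ^ k * A ^ (n - 1 - k) with hS2
  have e1 : S1 = (A ^ n - B ^ n) * s / 112 := by
    rw [eq_div_iff (by norm_num : (112:ℝ) ≠ 0)]
    have h : S1 * (8 * s) = A ^ n - B ^ n := by
      linear_combination hgeom1 - S1 * hA + S1 * hB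
    linear_combination s * h + (-8) * S1 * hs
  have e2 : S2 = (A ^ n - B ^ n) * s / 112 := by
    rw [eq_div_iff (by norm_num : (112:ℝ) ≠ 0)]
    have h : S2 * (8 * s) = A ^ n - B ^ n := by
      linear_combination -hgeom2 - S2 * hA + S2 * hB
    linear_combination s * h + (-8) * S2 * hs
  simp only [Finset.sum_add_distrib, Finset.sum_const, Finset.card_range, ← Finset.mul_sum,
    nsmul_eq_mul]
  rw [← hS1, ← hS2, e1, e2]
  ring
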